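/- arXiv:1708.04261 — 3 statements merged into one kernel-verified Lean document; each statement's English description precedes it below -/
import Mathlib

section
/- Exact cut recovery at binary points in the mixed case: let x̄ ∈ {0,1}^D with x̄_a = 0 for all a ∈ P₀, and let S = {a ∈ P₊ : x̄_a = 1}. If the affine function ∑_{a∈P₊} γ_a x_a + δ satisfies ∑_{a∈P₊} γ_a x̄_a + δ = h_{P₊}(S), then c · r(P₀) · [∑_{a∈P₊} γ_a x̄_a + δ − r(P₊)·∑_{a∈P₀} x̄_a] = h̄_P(x̄), where c = ∏_{a∈P\D} r_a, r(U) = ∏_{a∈U} r_a. Hence the inequality π ≥ c·r(P₀)·[∑ γ_a x_a + δ − r(P₊)∑_{a∈P₀} x_a] is tight at (x̄, h̄_P(x̄)). -/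
/-- Exact cut recovery at binary points in the mixed case. -/
theorem mixed_case_exact_cut
    {ι : Type*} [DecidableEq ι]
    (A D P : Finset ι) (hD : D ⊆ A) (hP : P ⊆ A)
    (r q : ι → ℝ)
    (hr : ∀ a ∈ A, 0 < r a ∧ r a ≤ 1)
    (hq : ∀ a ∈ D, 0 ≤ q a ∧ q a < r a)
    (Pp P0 : Finset ι)
    (hPp : Pp = (P ∩ D).filter (fun a => 0 < q a))
    (hP0 : P0 = (P ∩ D).filter (fun a => q a = 0))
    (xbar : ι → ℕ) (hx : ∀ a ∈ D, xbar a = 0 ∨ xbar a = 1)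
    (hx0 : ∀ a ∈ P0, xbar a = 0)
    (S : Finset ι) (hS : S = Pp.filter (fun a => xbar a = 1))
    (γ : ι → ℝ) (δ : ℝ)
    (haffine : (∑ a ∈ Pp, γ a * (xbar a : ℝ)) + δ
      = (∏ a ∈ Pp, r a) * ∏ a ∈ S, (q a / r a)) :
    (∏ a ∈ P \ D, r a) * (∏ a ∈ P0, r a) *
      ((∑ a ∈ Pp, γ a * (xbar a : ℝ)) + δ
        - (∏ a ∈ Pp, r a) * ∑ a ∈ P0, (xbar a : ℝ))
      = (∏ a ∈ P, r a) * ∏ a ∈ P ∩ D, (q a / r a) ^ (xbar a) := by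
  have hsum0 : (∑ a ∈ P0, (xbar a : ℝ)) = 0 := by
    apply Finset.sum_eq_zero
    intro a ha
    simp [hx0 a ha]
  -- P0 is the filter of ¬ 0 < q
  have hP0' : P0 = (P ∩ D).filter (fun a => ¬ 0 < q a) := by
    rw [hP0]
    apply Finset.filter_congr
    intro a ha
    have := (hq a (Finset.mem_inter.mp ha).2).1
    simp only [not_lt]
    exact ⟨fun h => le_of_eq h, fun h => le_antisymm h this⟩
  have hsplit : (∏ a ∈ P ∩ D, r a) = (∏ a ∈ Pp, r a) * ∏ a ∈ P0, r a := by
    rw [hPp, hP0', Finset.prod_filter_mul_prod_filter_not]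
  have hPprod : (∏ a ∈ P, r a) = (∏ a ∈ P \ D, r a) * ∏ a ∈ P ∩ D, r a := by
    rw [← Finset.prod_sdiff (Finset.inter_subset_left (s₂ := D)),
      Finset.sdiff_inter_self_left]
  have hprod1 : (∏ a ∈ P ∩ D, (q a / r a) ^ (xbar a))
      = (∏ a ∈ Pp, (q a / r a) ^ (xbar a)) * ∏ a ∈ P0, (q a / r a) ^ (xbar a) := by
    rw [hPp, hP0', Finset.prod_filter_mul_prod_filter_not]
  have hprodP0 : (∏ a ∈ P0, (q a / r a) ^ (xbar a)) = 1 := by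
    apply Finset.prod_eq_one
    intro a ha
    simp [hx0 a ha]
  have hprodPp : (∏ a ∈ Pp, (q a / r a) ^ (xbar a)) = ∏ a ∈ S, (q a / r a) := by
    rw [hS, Finset.prod_filter]
    apply Finset.prod_congr rfl
    intro a ha
    have haD : a ∈ D := by
      rw [hPp] at ha
      exact (Finset.mem_inter.mp (Finset.mem_filter.mp ha).1).2
    rcases hx a haD with h | h <;> simp [h]
  rw [haffine, hsum0, hPprod, hsplit, hprod1, hprodP0, hprodPp]
  ring
end

section
/- Equivalence of the linearized DP constraints and the bilinear DP inequalities at binary x: let x_a ∈ {0,1}, π_i, π_j ∈ ℝ with 0 ≤ π_j ≤ u_j, and 0 ≤ q_a < r_a ≤ 1. Then the pair of inequalities (π_i − r_a π_j ≥ −(r_a − q_a)·u_j·x_a) and (π_i − q_a π_j ≥ 0) holds if and only if π_i ≥ π_j·[r_a + (q_a − r_a)x_a]. -/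
/-- Equivalence of linearized DP constraints and the bilinear DP inequality
    at binary x. -/
theorem linearized_dp_equivalence
    (πi πj uj qa ra : ℝ) (x : ℕ)
    (hπj : 0 ≤ πj ∧ πj ≤ uj)
    (hq : 0 ≤ qa) (hqr : qa < ra) (hr : ra ≤ 1)
    (hx : x = 0 ∨ x = 1) :
    (πi - ra * πj ≥ -(ra - qa) * uj * (x : ℝ) ∧ πi - qa * πj ≥ 0) ↔
      πi ≥ πj * (ra + (qa - ra) * (x : ℝ)) := by
  obtain ⟨h1, h2⟩ := hπj
  rcases hx with h | h <;> subst h <;> push_cast <;>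
    constructor <;> intro hh
  · nlinarith [hh.1]
  · constructor <;> nlinarith
  · nlinarith [hh.2]
  · constructor <;> nlinarith
end

section
/- Validity of the general supermodular inequality for H_P at binary points: for any S ⊆ D and any x ∈ {0,1}^D with induced set S' = {a : x_a = 1}, h_P(S') ≥ h_P(S) − ∑_{a∈S} ρ_a(S\{a})·(1 − x_a) + ∑_{a∈D\S} ρ_a(∅)·x_a, where ρ_a(U) = h_P(U∪{a}) − h_P(U). Hence any (x, π) with π ≥ h_P(S') satisfies the linear inequality π ≥ h_P(S) − ∑_{a∈S} ρ_a(S\{a})(1 − x_a) + ∑_{a∈D\S} ρ_a(∅) x_a. -/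
open Finset

lemma aux_lem1 {ι : Type*} [DecidableEq ι] (K : Finset ι) (c : ι → ℝ)
    (hc : ∀ a ∈ K, 0 ≤ c a ∧ c a ≤ 1) :
    (∏ a ∈ K, c a) + ∑ a ∈ K, (1 - c a) * ∏ b ∈ K.erase a, c b ≤ 1 := by
  induction K using Finset.induction_on with
  | empty => simp
  | @insert b K hbK ih =>
    have hcb := hc b (mem_insert_self b K)
    have hcK : ∀ a ∈ K, 0 ≤ c a ∧ c a ≤ 1 := fun a ha => hc a (mem_insert_of_mem ha)
    have hPr : ∏ a ∈ insert b K, c a = c b * ∏ a ∈ K, c a := prod_insert hbK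
    have hsum1 : ∑ a ∈ insert b K, (1 - c a) * ∏ x ∈ (insert b K).erase a, c x
        = (1 - c b) * ∏ a ∈ K, c a
          + c b * ∑ a ∈ K, (1 - c a) * ∏ x ∈ K.erase a, c x := by
      rw [sum_insert hbK, erase_insert hbK, Finset.mul_sum]
      congr 1
      refine Finset.sum_congr rfl fun a ha => ?_
      have hab : a ≠ b := fun h => hbK (h ▸ ha)
      rw [erase_insert_of_ne hab.symm, prod_insert (fun h => hbK (mem_of_mem_erase h))]
      ring
    have hSnn : 0 ≤ ∑ a ∈ K, (1 - c a) * ∏ x ∈ K.erase a, c x := by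
      refine Finset.sum_nonneg fun a ha => mul_nonneg (by linarith [(hcK a ha).2]) ?_
      exact Finset.prod_nonneg fun x hx => (hcK x (mem_of_mem_erase hx)).1
    have := ih hcK
    rw [hPr, hsum1]
    nlinarith [hcb.1, hcb.2]

lemma aux_lem2 {ι : Type*} [DecidableEq ι] (K : Finset ι) (c : ι → ℝ)
    (hc : ∀ a ∈ K, 0 ≤ c a ∧ c a ≤ 1) :
    1 + ∑ a ∈ K, (c a - 1) ≤ ∏ a ∈ K, c a := by
  induction K using Finset.induction_on with
  | empty => simp
  | @insert b K hbK ih =>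
    have hcb := hc b (mem_insert_self b K)
    have hcK : ∀ a ∈ K, 0 ≤ c a ∧ c a ≤ 1 := fun a ha => hc a (mem_insert_of_mem ha)
    have hSg : ∑ a ∈ K, (c a - 1) ≤ 0 :=
      Finset.sum_nonpos fun a ha => by linarith [(hcK a ha).2]
    have hPnn : 0 ≤ ∏ a ∈ K, c a :=
      Finset.prod_nonneg fun a ha => (hcK a ha).1
    have := ih hcK
    rw [prod_insert hbK, sum_insert hbK]
    nlinarith [hcb.1, hcb.2]

lemma aux_lemA {ι : Type*} [DecidableEq ι] (F G : Finset ι) (hGF : G ⊆ F) (c : ι → ℝ)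
    (hc : ∀ a ∈ F, 0 ≤ c a ∧ c a ≤ 1) :
    (∏ a ∈ F, c a) - ∑ a ∈ F \ G, ((∏ b ∈ F, c b) - ∏ b ∈ F.erase a, c b)
      ≤ ∏ a ∈ G, c a := by
  set K := F \ G with hK
  have hFG : ∏ a ∈ F, c a = (∏ a ∈ G, c a) * ∏ a ∈ K, c a := by
    rw [mul_comm, Finset.prod_sdiff hGF]
  have herase : ∀ a ∈ K, ∏ b ∈ F.erase a, c b = (∏ b ∈ G, c b) * ∏ b ∈ K.erase a, c b := by
    intro a ha
    have haG : a ∉ G := (mem_sdiff.mp ha).2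
    have hGFe : G ⊆ F.erase a := fun x hx => mem_erase.mpr ⟨fun h => haG (h ▸ hx), hGF hx⟩
    have hset : F.erase a \ G = K.erase a := by
      ext x; simp only [mem_sdiff, mem_erase, hK]; tauto
    rw [mul_comm, ← Finset.prod_sdiff hGFe, hset]
  have hsum : ∑ a ∈ K, ((∏ b ∈ F, c b) - ∏ b ∈ F.erase a, c b)
      = -((∏ b ∈ G, c b) * ∑ a ∈ K, (1 - c a) * ∏ b ∈ K.erase a, c b) := by
    rw [Finset.mul_sum, ← Finset.sum_neg_distrib]
    refine Finset.sum_congr rfl fun a ha => ?_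
    have hmul : ∏ b ∈ K, c b = c a * ∏ b ∈ K.erase a, c b := (mul_prod_erase K c ha).symm
    rw [hFG, herase a ha, hmul]; ring
  have hGnn : 0 ≤ ∏ a ∈ G, c a := Finset.prod_nonneg fun a ha => (hc a (hGF ha)).1
  have hcK : ∀ a ∈ K, 0 ≤ c a ∧ c a ≤ 1 := fun a ha => hc a (mem_sdiff.mp ha).1
  have h1 := aux_lem1 K c hcK
  have key : (∏ a ∈ G, c a) * ((∏ a ∈ K, c a) + ∑ a ∈ K, (1 - c a) * ∏ b ∈ K.erase a, c b)
      ≤ (∏ a ∈ G, c a) * 1 := mul_le_mul_of_nonneg_left h1 hGnn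
  rw [hsum, hFG]
  nlinarith [key]

/-- Validity of the general supermodular inequality for H_P at binary points. -/
theorem supermodular_inequality_valid
    {ι : Type*} [DecidableEq ι]
    (A D P : Finset ι) (hD : D ⊆ A) (hP : P ⊆ A)
    (r q : ι → ℝ)
    (hr : ∀ a ∈ A, 0 < r a ∧ r a ≤ 1)
    (hq : ∀ a ∈ D, 0 ≤ q a ∧ q a < r a)
    (hPfun : Finset ι → ℝ)
    (hPdef : ∀ S : Finset ι,
      hPfun S = (∏ a ∈ P, r a) * ∏ a ∈ P ∩ S, (q a / r a))
    (ρ : ι → Finset ι → ℝ)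
    (hρ : ∀ a U, ρ a U = hPfun (insert a U) - hPfun U)
    (S : Finset ι) (hS : S ⊆ D)
    (x : ι → ℕ) (hx : ∀ a ∈ D, x a = 0 ∨ x a = 1)
    (S' : Finset ι) (hS' : S' = D.filter (fun a => x a = 1)) :
    hPfun S' ≥ hPfun S
        - (∑ a ∈ S, ρ a (S.erase a) * (1 - (x a : ℝ)))
        + (∑ a ∈ D \ S, ρ a ∅ * (x a : ℝ)) ∧
      ∀ π : ℝ, π ≥ hPfun S' →
        π ≥ hPfun S
          - (∑ a ∈ S, ρ a (S.erase a) * (1 - (x a : ℝ)))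
          + (∑ a ∈ D \ S, ρ a ∅ * (x a : ℝ)) := by
  have hmain : hPfun S' ≥ hPfun S
        - (∑ a ∈ S, ρ a (S.erase a) * (1 - (x a : ℝ)))
        + (∑ a ∈ D \ S, ρ a ∅ * (x a : ℝ)) := by
    set C : ℝ := ∏ a ∈ P, r a with hCdef
    set c : ι → ℝ := fun a => q a / r a with hcdef
    have hC : 0 < C := Finset.prod_pos fun a ha => (hr a (hP ha)).1
    have hfun : ∀ T : Finset ι, hPfun T = C * ∏ a ∈ P ∩ T, c a := hPdef
    have hc : ∀ a ∈ D, 0 ≤ c a ∧ c a ≤ 1 := by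
      intro a ha
      obtain ⟨h1, h2⟩ := hq a ha
      obtain ⟨h3, _⟩ := hr a (hD ha)
      exact ⟨div_nonneg h1 h3.le, (div_le_one h3).mpr h2.le⟩
    have hS'D : S' ⊆ D := by rw [hS']; exact Finset.filter_subset _ _
    have hxS' : ∀ a ∈ S', x a = 1 := by
      intro a ha; rw [hS'] at ha; exact (Finset.mem_filter.mp ha).2
    have hx0 : ∀ a ∈ D, a ∉ S' → x a = 0 := by
      intro a haD h
      rcases hx a haD with h0 | h1
      · exact h0
      · exact absurd (hS' ▸ Finset.mem_filter.mpr ⟨haD, h1⟩) h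
    -- abbreviations
    set F : Finset ι := P ∩ S with hFdef
    set G : Finset ι := P ∩ (S ∩ S') with hGdef
    set V : Finset ι := P ∩ (S' \ S) with hVdef
    have hGF : G ⊆ F :=
      Finset.inter_subset_inter (Finset.Subset.refl P) Finset.inter_subset_left
    -- simplify the two sums
    have hsum1 : ∑ a ∈ S, ρ a (S.erase a) * (1 - (x a : ℝ))
        = ∑ a ∈ S \ S', ρ a (S.erase a) := by
      rw [← Finset.sum_inter_add_sum_sdiff S S' (fun a => ρ a (S.erase a) * (1 - (x a : ℝ)))]
      have h1 : ∑ a ∈ S ∩ S', ρ a (S.erase a) * (1 - (x a : ℝ)) = 0 := by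
        refine Finset.sum_eq_zero fun a ha => ?_
        rw [hxS' a (Finset.mem_inter.mp ha).2]; norm_num
      have h2 : ∑ a ∈ S \ S', ρ a (S.erase a) * (1 - (x a : ℝ))
          = ∑ a ∈ S \ S', ρ a (S.erase a) := by
        refine Finset.sum_congr rfl fun a ha => ?_
        obtain ⟨haS, haS'⟩ := Finset.mem_sdiff.mp ha
        rw [hx0 a (hS haS) haS']; norm_num
      rw [h1, h2, zero_add]
    have hsum2 : ∑ a ∈ D \ S, ρ a ∅ * (x a : ℝ) = ∑ a ∈ S' \ S, ρ a ∅ := by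
      rw [← Finset.sum_inter_add_sum_sdiff (D \ S) S' (fun a => ρ a ∅ * (x a : ℝ))]
      have h1 : ∑ a ∈ (D \ S) \ S', ρ a ∅ * (x a : ℝ) = 0 := by
        refine Finset.sum_eq_zero fun a ha => ?_
        obtain ⟨haDS, haS'⟩ := Finset.mem_sdiff.mp ha
        rw [hx0 a (Finset.mem_sdiff.mp haDS).1 haS']; norm_num
      have hset : (D \ S) ∩ S' = S' \ S := by
        ext a
        simp only [Finset.mem_inter, Finset.mem_sdiff]
        exact ⟨fun h => ⟨h.2, h.1.2⟩, fun h => ⟨⟨hS'D h.1, h.2⟩, h.1⟩⟩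
      have h2 : ∑ a ∈ (D \ S) ∩ S', ρ a ∅ * (x a : ℝ) = ∑ a ∈ S' \ S, ρ a ∅ := by
        rw [hset]
        refine Finset.sum_congr rfl fun a ha => ?_
        rw [hxS' a (Finset.mem_sdiff.mp ha).1]; norm_num
      rw [h1, h2, add_zero]
    -- restrict the first sum to P
    have herase_inter : ∀ a ∈ P, P ∩ S.erase a = F.erase a := by
      intro a haP
      ext y
      simp only [hFdef, Finset.mem_inter, Finset.mem_erase]
      tauto
    have hnotP_inter : ∀ a, a ∉ P → P ∩ S.erase a = F := by
      intro a haP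
      ext y
      simp only [hFdef, Finset.mem_inter, Finset.mem_erase]
      constructor
      · rintro ⟨h1, _, h3⟩; exact ⟨h1, h3⟩
      · rintro ⟨h1, h3⟩; exact ⟨h1, fun h => haP (h ▸ h1), h3⟩
    have hresA : ∑ a ∈ S \ S', ρ a (S.erase a)
        = ∑ a ∈ F \ G, (C * ∏ b ∈ F, c b - C * ∏ b ∈ F.erase a, c b) := by
      have step1 : ∑ a ∈ S \ S', ρ a (S.erase a)
          = ∑ a ∈ S \ S', (hPfun S - hPfun (S.erase a)) := by
        refine Finset.sum_congr rfl fun a ha => ?_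
        rw [hρ, Finset.insert_erase (Finset.mem_sdiff.mp ha).1]
      have hsub : F \ G ⊆ S \ S' := by
        intro a ha
        obtain ⟨haF, haG⟩ := Finset.mem_sdiff.mp ha
        obtain ⟨haP, haS⟩ := Finset.mem_inter.mp haF
        refine Finset.mem_sdiff.mpr ⟨haS, fun haS' => haG ?_⟩
        exact Finset.mem_inter.mpr ⟨haP, Finset.mem_inter.mpr ⟨haS, haS'⟩⟩
      have step2 : ∑ a ∈ S \ S', (hPfun S - hPfun (S.erase a))
          = ∑ a ∈ F \ G, (hPfun S - hPfun (S.erase a)) := by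
        refine (Finset.sum_subset hsub fun a ha ha' => ?_).symm
        obtain ⟨haS, haS'⟩ := Finset.mem_sdiff.mp ha
        have haP : a ∉ P := by
          intro haP
          refine ha' (Finset.mem_sdiff.mpr ⟨Finset.mem_inter.mpr ⟨haP, haS⟩, ?_⟩)
          intro haG
          exact haS' (Finset.mem_inter.mp (Finset.mem_inter.mp haG).2).2
        rw [hfun S, hfun (S.erase a), hnotP_inter a haP, hFdef]
        ring
      have step3 : ∑ a ∈ F \ G, (hPfun S - hPfun (S.erase a))
          = ∑ a ∈ F \ G, (C * ∏ b ∈ F, c b - C * ∏ b ∈ F.erase a, c b) := by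
        refine Finset.sum_congr rfl fun a ha => ?_
        have haP : a ∈ P := (Finset.mem_inter.mp (Finset.mem_sdiff.mp ha).1).1
        rw [hfun S, hfun (S.erase a), herase_inter a haP, hFdef]
      rw [step1, step2, step3]
    -- restrict the second sum to P
    have hresB : ∑ a ∈ S' \ S, ρ a ∅ = C * ∑ a ∈ V, (c a - 1) := by
      have hsubV : V ⊆ S' \ S := Finset.inter_subset_right
      have step2 : ∑ a ∈ S' \ S, ρ a ∅ = ∑ a ∈ V, ρ a ∅ := by
        refine (Finset.sum_subset hsubV fun a ha ha' => ?_).symm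
        have haP : a ∉ P := fun haP => ha' (Finset.mem_inter.mpr ⟨haP, ha⟩)
        rw [hρ, hfun, hfun]
        have h1 : P ∩ insert a ∅ = P ∩ (∅ : Finset ι) := by
          ext y
          simp only [Finset.mem_inter, Finset.mem_insert, Finset.notMem_empty]
          constructor
          · rintro ⟨hy, hy2 | hy2⟩
            · exact absurd (hy2 ▸ hy) haP
            · exact hy2.elim
          · rintro ⟨_, h⟩; exact h.elim
        rw [h1]
        ring
      have step3 : ∑ a ∈ V, ρ a ∅ = ∑ a ∈ V, (C * c a - C) := by
        refine Finset.sum_congr rfl fun a ha => ?_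
        have haP : a ∈ P := (Finset.mem_inter.mp ha).1
        have h1 : P ∩ insert a ∅ = {a} := by
          ext y
          simp only [Finset.mem_inter, Finset.mem_insert, Finset.notMem_empty,
            Finset.mem_singleton, or_false]
          exact ⟨fun h => h.2, fun h => ⟨h ▸ haP, h⟩⟩
        rw [hρ, hfun, hfun, h1, Finset.inter_empty, Finset.prod_singleton,
          Finset.prod_empty]
        ring
      rw [step2, step3, Finset.mul_sum]
      refine Finset.sum_congr rfl fun a ha => ?_
      ring
    -- bounds on c over the relevant sets
    have hcF : ∀ a ∈ F, 0 ≤ c a ∧ c a ≤ 1 := fun a ha =>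
      hc a (hS (Finset.mem_inter.mp ha).2)
    have hcV : ∀ a ∈ V, 0 ≤ c a ∧ c a ≤ 1 := fun a ha =>
      hc a (hS'D (Finset.mem_sdiff.mp (Finset.mem_inter.mp ha).2).1)
    have hcG : ∀ a ∈ G, 0 ≤ c a ∧ c a ≤ 1 := fun a ha => hcF a (hGF ha)
    have hGnn : 0 ≤ ∏ a ∈ G, c a := Finset.prod_nonneg fun a ha => (hcG a ha).1
    have hGle1 : ∏ a ∈ G, c a ≤ 1 :=
      Finset.prod_le_one (fun a ha => (hcG a ha).1) (fun a ha => (hcG a ha).2)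
    have hVnn : 0 ≤ ∏ a ∈ V, c a := Finset.prod_nonneg fun a ha => (hcV a ha).1
    have hVle1 : ∏ a ∈ V, c a ≤ 1 :=
      Finset.prod_le_one (fun a ha => (hcV a ha).1) (fun a ha => (hcV a ha).2)
    -- Claim A : hPfun (S ∩ S') ≥ hPfun S - (first sum)
    have claimA : hPfun S - ∑ a ∈ S \ S', ρ a (S.erase a) ≤ hPfun (S ∩ S') := by
      rw [hresA, hfun S, hfun (S ∩ S'), ← hFdef, ← hGdef]
      have hA := aux_lemA F G hGF c hcF
      have hfac : ∑ a ∈ F \ G, (C * ∏ b ∈ F, c b - C * ∏ b ∈ F.erase a, c b)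
          = C * ∑ a ∈ F \ G, ((∏ b ∈ F, c b) - ∏ b ∈ F.erase a, c b) := by
        rw [Finset.mul_sum]
        exact Finset.sum_congr rfl fun a ha => by ring
      rw [hfac]
      nlinarith [mul_le_mul_of_nonneg_left hA hC.le]
    -- Claim B : hPfun S' ≥ hPfun (S ∩ S') + (second sum)
    have claimB : hPfun (S ∩ S') + C * ∑ a ∈ V, (c a - 1) ≤ hPfun S' := by
      rw [hfun S', hfun (S ∩ S'), ← hGdef]
      have hGsub : G ⊆ P ∩ S' :=
        Finset.inter_subset_inter (Finset.Subset.refl P) Finset.inter_subset_right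
      have hsetV : (P ∩ S') \ G = V := by
        ext y
        simp only [hGdef, hVdef, Finset.mem_sdiff, Finset.mem_inter]
        tauto
      have hsplit : ∏ a ∈ P ∩ S', c a = (∏ a ∈ G, c a) * ∏ a ∈ V, c a := by
        rw [mul_comm, ← Finset.prod_sdiff hGsub, hsetV]
      rw [hsplit]
      have h2 := aux_lem2 V c hcV
      have k2 : 0 ≤ (1 - ∏ a ∈ G, c a) * (1 - ∏ a ∈ V, c a) :=
        mul_nonneg (by linarith) (by linarith)
      have key : (∏ a ∈ G, c a) + ∑ a ∈ V, (c a - 1)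
          ≤ (∏ a ∈ G, c a) * ∏ a ∈ V, c a := by nlinarith [k2, h2]
      nlinarith [mul_le_mul_of_nonneg_left key hC.le]
    rw [hsum1, hsum2, hresB]
    have := hresB
    linarith [claimA, claimB]
  exact ⟨hmain, fun π hπ => le_trans hmain hπ⟩
end
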